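/- Let x : ℕ → ℝ be a sequence of positive real numbers satisfying the Somos-5 recurrence x_n · x_{n+5} = x_{n+1} · x_{n+4} + x_{n+2} · x_{n+3} for all n ≥ 1, and define u_n := (x_n · x_{n+3})/(x_{n+1} · x_{n+2}). Then u satisfies the second-order U-system u_n · u_{n+1} · u_{n+2} = u_{n+1} + 1, i.e. u_n · u_{n+2} = (u_{n+1} + 1)/u_{n+1}, for all n ≥ 1. -/

import Mathlib

/-- For the Somos-5 recurrence `x n * x (n+5) = x (n+1) * x (n+4) + x (n+2) * x (n+3)`
on positive reals, `u n = x n * x (n+3) / (x (n+1) * x (n+2))` satisfies the U-system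
`u n * u (n+1) * u (n+2) = u (n+1) + 1`, i.e. `u n * u (n+2) = (u (n+1) + 1) / u (n+1)`. -/
theorem stmt_14 (x : ℕ → ℝ) (hpos : ∀ n, 0 < x n)
    (hrec : ∀ n, 1 ≤ n → x n * x (n + 5) = x (n + 1) * x (n + 4) + x (n + 2) * x (n + 3))
    (u : ℕ → ℝ) (hu : ∀ n, u n = x n * x (n + 3) / (x (n + 1) * x (n + 2))) :
    ∀ n, 1 ≤ n →
      u n * u (n + 1) * u (n + 2) = u (n + 1) + 1 ∧
      u n * u (n + 2) = (u (n + 1) + 1) / u (n + 1) := by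
  intro n hn
  have h0 := (hpos n).ne'
  have h1 := (hpos (n+1)).ne'
  have h2 := (hpos (n+2)).ne'
  have h3 := (hpos (n+3)).ne'
  have h4 := (hpos (n+4)).ne'
  have h5 := (hpos (n+5)).ne'
  have hr := hrec n hn
  have hun1 : u (n+1) ≠ 0 := by
    rw [hu]
    positivity
  have key : u n * u (n + 1) * u (n + 2) = u (n + 1) + 1 := by
    rw [hu, hu, hu]
    have e2 : n + 1 + 1 = n + 2 := by ring
    have e3 : n + 1 + 2 = n + 3 := by ring
    have e4 : n + 1 + 3 = n + 4 := by ring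
    have e5 : n + 2 + 3 = n + 5 := by ring
    have e6 : n + 2 + 1 = n + 3 := by ring
    have e7 : n + 2 + 2 = n + 4 := by ring
    rw [e2, e3, e4, e5, e6, e7]
    field_simp
    linear_combination hr
  refine ⟨key, ?_⟩
  field_simp
  calc u n * u (n+2) * u (n+1) = u n * u (n+1) * u (n+2) := by ring
    _ = u (n+1) + 1 := key
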